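/- Let ℓ ≥ 1 and let 𝒫(y) = Σ_{|α| ≤ 2ℓ−2} b_α (y−x)^α be any polynomial of degree at most 2ℓ−2 on ℝⁿ. Then for all y ≠ x: Σ_{|α| ≤ ℓ−1} [(2ℓ−2−|α|)! / ((ℓ−1−|α|)! α!)] · (y−x)^α / |y−x|^{2ℓ−1} · [(−1)^{|α|} D^α 𝒫(y) − D^α 𝒫(x)] = 0. -/

import Mathlib

open Set Finset

/-- The finite set of multi-indices α : Fin n → ℕ with |α| = Σ α i ≤ d. -/
def mIdxLe (n d : ℕ) : Finset (Fin n → ℕ) :=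
  ((Finset.univ : Finset (Fin n → Fin (d+1))).image fun a i => ((a i : ℕ))).filter
    fun α => ∑ i, α i ≤ d

lemma mem_mIdxLe {n d : ℕ} {α : Fin n → ℕ} : α ∈ mIdxLe n d ↔ ∑ i, α i ≤ d := by
  unfold mIdxLe
  simp only [Finset.mem_filter, Finset.mem_image, Finset.mem_univ, true_and, and_iff_right_iff_imp]
  intro h
  refine ⟨fun i => ⟨α i, ?_⟩, funext fun i => rfl⟩
  have : α i ≤ ∑ j, α j := Finset.single_le_sum (fun j _ => Nat.zero_le (α j)) (Finset.mem_univ i)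
  omega

lemma mIdxLe_eq_biUnion (n d : ℕ) :
    mIdxLe n d = (range (d+1)).biUnion fun k => (Finset.univ : Finset (Fin n)).piAntidiag k := by
  ext α
  simp only [mem_mIdxLe, Finset.mem_biUnion, Finset.mem_range, Finset.mem_piAntidiag,
    Finset.mem_univ, implies_true, and_true, Nat.lt_succ_iff]
  constructor
  · intro h; exact ⟨∑ i, α i, h, rfl⟩
  · rintro ⟨k, hk, rfl⟩; exact hk

lemma piAntidiag_pairwiseDisjoint (n d : ℕ) :
    (↑(range (d+1)) : Set ℕ).PairwiseDisjoint
      (fun k => (Finset.univ : Finset (Fin n)).piAntidiag k) := by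
  intro k1 _ k2 _ hne
  simp only [Function.onFun, Finset.disjoint_left]
  intro α h1 h2
  rw [Finset.mem_piAntidiag] at h1 h2
  exact hne (h1.1.symm.trans h2.1)

noncomputable def Vaux {n : ℕ} (D : ℕ) (x : EuclideanSpace ℝ (Fin n)) (b : (Fin n → ℕ) → ℝ)
    (α : Fin n → ℕ) (y : EuclideanSpace ℝ (Fin n)) : ℝ :=
  ∑ β ∈ mIdxLe n D, b β * ∏ i, (((β i).descFactorial (α i) : ℝ) * (y i - x i) ^ (β i - α i))

lemma lemC (z : ℝ) (a c : ℕ) :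
    z ^ a * (((c.descFactorial a : ℕ) : ℝ) * z ^ (c - a))
      = ((c.choose a : ℕ) : ℝ) * ((a.factorial : ℕ) : ℝ) * z ^ c := by
  rcases le_or_gt a c with h | h
  · rw [Nat.descFactorial_eq_factorial_mul_choose]
    have : z ^ a * z ^ (c - a) = z ^ c := by
      rw [← pow_add]
      congr 1
      omega
    push_cast
    rw [mul_comm (z ^ a), mul_assoc, mul_comm (z ^ (c-a)), this]
    ring
  · rw [Nat.choose_eq_zero_of_lt h, Nat.descFactorial_eq_zero_iff_lt.mpr h]
    simp

lemma lemZ : ∀ (m : ℕ), ∀ N L : ℕ, m ≤ N →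
    ∑ k ∈ range (m+1), (-1:ℤ)^k * (m.choose k) * ((N-k).choose L)
      = if m ≤ L then ((N-m).choose (L-m) : ℤ) else 0 := by
  intro m
  induction m with
  | zero => intro N L _; simp
  | succ m ih =>
    intro N L hm
    have hmN : m ≤ N - 1 := by omega
    have split : ∀ k, (-1:ℤ)^k * ((m+1).choose k) * ((N-k).choose L)
        = (-1:ℤ)^k * (m.choose k) * ((N-k).choose L)
          + (-1:ℤ)^k * (((m+1).choose k : ℤ) - (m.choose k)) * ((N-k).choose L) := by
      intro k; ring
    have hd : ∑ k ∈ range (m+2), (-1:ℤ)^k * (((m+1).choose k : ℤ) - (m.choose k)) * ((N-k).choose L)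
        = - ∑ k ∈ range (m+1), (-1:ℤ)^k * (m.choose k) * (((N-1)-k).choose L) := by
      rw [Finset.sum_range_succ']
      simp only [Nat.choose_zero_right, pow_zero]
      have : ∀ k, (-1:ℤ)^(k+1) * (((m+1).choose (k+1) : ℤ) - (m.choose (k+1))) * ((N-(k+1)).choose L)
          = -((-1:ℤ)^k * (m.choose k) * (((N-1)-k).choose L)) := by
        intro k
        have h1 : (m+1).choose (k+1) = m.choose k + m.choose (k+1) := Nat.choose_succ_succ m k
        have h2 : N - (k+1) = (N-1) - k := by omega
        rw [h1, h2]; push_cast; ring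
      rw [Finset.sum_congr rfl fun k _ => this k, Finset.sum_neg_distrib]
      simp
    have hz : ∑ k ∈ range (m+2), (-1:ℤ)^k * (m.choose k) * ((N-k).choose L)
        = ∑ k ∈ range (m+1), (-1:ℤ)^k * (m.choose k) * ((N-k).choose L) := by
      rw [Finset.sum_range_succ, Nat.choose_succ_self]
      simp
    calc ∑ k ∈ range (m+2), (-1:ℤ)^k * ((m+1).choose k) * ((N-k).choose L)
        = ∑ k ∈ range (m+2), ((-1:ℤ)^k * (m.choose k) * ((N-k).choose L)
          + (-1:ℤ)^k * (((m+1).choose k : ℤ) - (m.choose k)) * ((N-k).choose L)) :=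
          Finset.sum_congr rfl fun k _ => split k
      _ = (∑ k ∈ range (m+1), (-1:ℤ)^k * (m.choose k) * ((N-k).choose L))
          - ∑ k ∈ range (m+1), (-1:ℤ)^k * (m.choose k) * (((N-1)-k).choose L) := by
          rw [Finset.sum_add_distrib, hd, hz]; ring
      _ = (if m ≤ L then ((N-m).choose (L-m) : ℤ) else 0)
          - (if m ≤ L then (((N-1)-m).choose (L-m) : ℤ) else 0) := by
          rw [ih N L (by omega), ih (N-1) L hmN]
      _ = if m + 1 ≤ L then ((N-(m+1)).choose (L-(m+1)) : ℤ) else 0 := by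
          rcases lt_trichotomy m L with h | h | h
          · have e1 : N - m = (N - (m+1)) + 1 := by omega
            have e2 : L - m = (L - (m+1)) + 1 := by omega
            have e3 : (N-1) - m = N - (m+1) := by omega
            have hp : (N-(m+1)+1).choose (L-(m+1)+1)
                = (N-(m+1)).choose (L-(m+1)) + (N-(m+1)).choose (L-(m+1)+1) :=
              Nat.choose_succ_succ _ _
            rw [if_pos (le_of_lt h), if_pos (le_of_lt h), if_pos (by omega : m+1 ≤ L),
              e1, e2, e3, hp]
            push_cast; ring
          · have e2 : L - m = 0 := by omega
            rw [if_pos (le_of_eq h), if_pos (le_of_eq h), if_neg (by omega : ¬ m+1 ≤ L), e2]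
            simp
          · rw [if_neg (by omega : ¬ m ≤ L), if_neg (by omega : ¬ m ≤ L),
              if_neg (by omega : ¬ m+1 ≤ L)]
            ring

lemma lemV {ι : Type*} [DecidableEq ι] (s : Finset ι) (β : ι → ℕ) :
    ∀ k : ℕ, ∑ α ∈ s.piAntidiag k, ∏ i ∈ s, (β i).choose (α i) = (∑ i ∈ s, β i).choose k := by
  induction s using Finset.cons_induction with
  | empty =>
    intro k
    cases k with
    | zero => simp
    | succ k => simp [Finset.piAntidiag_empty_of_ne_zero (Nat.succ_ne_zero k)]
  | cons i s hi ih =>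
    intro k
    rw [Finset.piAntidiag_cons hi, Finset.sum_disjiUnion]
    rw [Finset.sum_cons, Nat.add_choose_eq]
    refine Finset.sum_congr rfl fun p hp => ?_
    rw [Finset.sum_map]
    have : ∀ f ∈ s.piAntidiag p.2,
        ∏ j ∈ cons i s hi, (β j).choose ((addRightEmbedding
            (fun t => if t = i then p.1 else 0) f) j)
          = (β i).choose p.1 * ∏ j ∈ s, (β j).choose (f j) := by
      intro f hf
      have hfi : f i = 0 := by
        rw [Finset.mem_piAntidiag] at hf
        by_contra h
        exact hi (hf.2 i h)
      rw [Finset.prod_cons]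
      congr 1
      · simp [addRightEmbedding, hfi]
      · refine Finset.prod_congr rfl fun j hj => ?_
        have : j ≠ i := fun h => hi (h ▸ hj)
        simp [addRightEmbedding, this]
    rw [Finset.sum_congr rfl this, ← Finset.mul_sum, ih p.2]


lemma lemS (L : ℕ) {m : ℕ} (hm : m ≤ 2*L) :
    ∑ k ∈ range (L+1), (-1:ℝ)^k * (m.choose k) *
        ((2*L-k).factorial / (L-k).factorial : ℝ)
      = if m ≤ L then ((2*L-m).factorial / (L-m).factorial : ℝ) else 0 := by
  have he : ∀ k, k ≤ L → ((2*L-k).factorial / (L-k).factorial : ℝ)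
      = ((2*L-k).choose L : ℝ) * (L.factorial : ℝ) := by
    intro k hk
    have h : L ≤ 2*L - k := by omega
    have h1 := Nat.choose_mul_factorial_mul_factorial h
    have h2 : 2*L-k-L = L-k := by omega
    rw [h2] at h1
    rw [div_eq_iff (by exact_mod_cast (L-k).factorial_ne_zero)]
    rw [← h1]; push_cast; ring
  have hT : ∑ k ∈ range (L+1), (-1:ℤ)^k * (m.choose k) * ((2*L-k).choose L)
      = if m ≤ L then ((2*L-m).choose L : ℤ) else 0 := by
    rcases le_or_gt m L with h | h
    · have hsub : range (m+1) ⊆ range (L+1) := Finset.range_subset_range.mpr (by omega)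
      have := lemZ m (2*L) L (by omega)
      rw [← Finset.sum_subset hsub (fun k _ hk => by
        have : m < k := by simp at hk ⊢; omega
        simp [Nat.choose_eq_zero_of_lt this])]
      rw [this, if_pos h, if_pos h]
      norm_cast
      have h3 : L ≤ 2*L - m := by omega
      have h5 := Nat.choose_symm h3
      have h4 : 2*L - m - L = L - m := by omega
      rw [h4] at h5
      exact h5
    · have hL1 : 1 ≤ L ∨ m = 0 := by omega
      have hsub : range (L+1) ⊆ range (m+1) := Finset.range_subset_range.mpr (by omega)
      have := lemZ m (2*L) L (by omega)
      rw [Finset.sum_subset hsub (fun k hk hk2 => by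
        have hk3 : L < k := by simp at hk2 ⊢; omega
        have hk4 : k ≤ m := by simp at hk; omega
        have : 2*L - k < L := by omega
        simp [Nat.choose_eq_zero_of_lt this])]
      rw [this, if_neg (by omega), if_neg (by omega)]
  have cast1 : ∑ k ∈ range (L+1), (-1:ℝ)^k * (m.choose k) * ((2*L-k).choose L : ℝ)
      = ((if m ≤ L then ((2*L-m).choose L : ℤ) else 0 : ℤ) : ℝ) := by
    rw [← hT]; push_cast
    exact Finset.sum_congr rfl fun k _ => by ring
  calc ∑ k ∈ range (L+1), (-1:ℝ)^k * (m.choose k) * ((2*L-k).factorial / (L-k).factorial : ℝ)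
      = ∑ k ∈ range (L+1), ((-1:ℝ)^k * (m.choose k) * ((2*L-k).choose L : ℝ)) * (L.factorial : ℝ) := by
        refine Finset.sum_congr rfl fun k hk => ?_
        rw [he k (by simp at hk; omega)]; ring
    _ = (∑ k ∈ range (L+1), (-1:ℝ)^k * (m.choose k) * ((2*L-k).choose L : ℝ)) * (L.factorial : ℝ) :=
        (Finset.sum_mul _ _ _).symm
    _ = ((if m ≤ L then ((2*L-m).choose L : ℤ) else 0 : ℤ) : ℝ) * (L.factorial : ℝ) := by rw [cast1]
    _ = if m ≤ L then ((2*L-m).factorial / (L-m).factorial : ℝ) else 0 := by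
        rcases le_or_gt m L with h | h
        · rw [if_pos h, if_pos h, he m h]; push_cast; ring
        · rw [if_neg (by omega), if_neg (by omega)]; simp

lemma Vaux_hasDerivAt {n : ℕ} (D : ℕ) (x : EuclideanSpace ℝ (Fin n)) (b : (Fin n → ℕ) → ℝ)
    (α : Fin n → ℕ) (i : Fin n) (y : EuclideanSpace ℝ (Fin n)) :
    HasDerivAt (fun t : ℝ => Vaux D x b α (y + t • EuclideanSpace.single i (1:ℝ)))
      (Vaux D x b (α + Pi.single i 1) y) 0 := by
  have happ : ∀ (t : ℝ) (j : Fin n),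
      (y + t • EuclideanSpace.single i (1:ℝ)) j = y j + t * (if j = i then 1 else 0) := by
    intro t j
    simp [EuclideanSpace.single_apply, PiLp.add_apply, PiLp.smul_apply, smul_eq_mul]
  have hfun : (fun t : ℝ => Vaux D x b α (y + t • EuclideanSpace.single i (1:ℝ)))
      = fun t : ℝ => ∑ β ∈ mIdxLe n D, b β *
          ((((β i).descFactorial (α i) : ℝ) * (t + (y i - x i)) ^ (β i - α i)) *
            ∏ j ∈ Finset.univ.erase i,
              (((β j).descFactorial (α j) : ℝ) * (y j - x j) ^ (β j - α j))) := by
    funext t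
    unfold Vaux
    refine Finset.sum_congr rfl fun β _ => ?_
    congr 1
    rw [← Finset.mul_prod_erase Finset.univ _ (Finset.mem_univ i)]
    congr 1
    · rw [happ t i, if_pos rfl]; ring_nf
    · refine Finset.prod_congr rfl fun j hj => ?_
      rw [happ t j]
      have : j ≠ i := (Finset.mem_erase.mp hj).1
      simp [this]
  rw [hfun]
  have hder : ∀ β ∈ mIdxLe n D, HasDerivAt
      (fun t : ℝ => b β *
          ((((β i).descFactorial (α i) : ℝ) * (t + (y i - x i)) ^ (β i - α i)) *
            ∏ j ∈ Finset.univ.erase i,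
              (((β j).descFactorial (α j) : ℝ) * (y j - x j) ^ (β j - α j))))
      (b β * ∏ j, (((β j).descFactorial (((α + Pi.single i 1 : Fin n → ℕ) j)) : ℝ) *
          (y j - x j) ^ (β j - ((α + Pi.single i 1 : Fin n → ℕ) j)))) 0 := by
    intro β _
    have h1 : HasDerivAt (fun t : ℝ => (t + (y i - x i)) ^ (β i - α i))
        (((β i - α i : ℕ) : ℝ) * (y i - x i) ^ (β i - α i - 1)) 0 := by
      have := ((hasDerivAt_id (0:ℝ)).add_const (y i - x i)).fun_pow (β i - α i)
      simpa using this
    have h2 := (h1.const_mul (((β i).descFactorial (α i) : ℝ))).mul_const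
      (∏ j ∈ Finset.univ.erase i, (((β j).descFactorial (α j) : ℝ) * (y j - x j) ^ (β j - α j)))
    have h3 := h2.const_mul (b β)
    refine HasDerivAt.congr_deriv h3 (Eq.symm ?_)
    rw [← Finset.mul_prod_erase Finset.univ _ (Finset.mem_univ i)]
    have e1 : ((α + Pi.single i 1 : Fin n → ℕ)) i = α i + 1 := by simp
    have e2 : ∀ j, j ≠ i → (α + Pi.single i 1 : Fin n → ℕ) j = α j := by
      intro j hj; simp [Pi.single_apply, hj]
    rw [e1, Nat.descFactorial_succ]
    have e3 : β i - (α i + 1) = β i - α i - 1 := by omega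
    rw [e3]
    have e4 : (Finset.univ.erase i).prod
        (fun j => (((β j).descFactorial (((α + Pi.single i 1 : Fin n → ℕ) j)) : ℝ) *
          (y j - x j) ^ (β j - ((α + Pi.single i 1 : Fin n → ℕ) j))))
        = ∏ j ∈ Finset.univ.erase i, (((β j).descFactorial (α j) : ℝ) * (y j - x j) ^ (β j - α j)) := by
      refine Finset.prod_congr rfl fun j hj => ?_
      rw [e2 j (Finset.mem_erase.mp hj).1]
    rw [e4]
    push_cast
    ring
  have := HasDerivAt.fun_sum hder
  unfold Vaux
  convert this using 2

lemma U_eq_Vaux {n : ℕ} (D : ℕ) (x : EuclideanSpace ℝ (Fin n)) (b : (Fin n → ℕ) → ℝ)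
    (U : (Fin n → ℕ) → EuclideanSpace ℝ (Fin n) → ℝ)
    (hU0 : U 0 = fun y => ∑ β ∈ mIdxLe n D, b β * ∏ i, (y i - x i) ^ (β i))
    (hUd : ∀ (α : Fin n → ℕ) (i : Fin n) (y : EuclideanSpace ℝ (Fin n)),
      HasDerivAt (fun t : ℝ => U α (y + t • EuclideanSpace.single i (1:ℝ)))
        (U (α + Pi.single i 1) y) 0) :
    ∀ α, U α = Vaux D x b α := by
  have key : ∀ k : ℕ, ∀ α : Fin n → ℕ, ∑ i, α i = k → U α = Vaux D x b α := by
    intro k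
    induction k with
    | zero =>
      intro α hα
      have : α = 0 := by
        funext i
        have := (Finset.sum_eq_zero_iff.mp hα) i (Finset.mem_univ i)
        simpa using this
      subst this
      rw [hU0]
      funext y
      unfold Vaux
      refine Finset.sum_congr rfl fun β _ => ?_
      simp [Nat.descFactorial_zero]
    | succ k ih =>
      intro α hα
      have hex : ∃ i, α i ≠ 0 := by
        by_contra h
        push_neg at h
        simp [h] at hα
      obtain ⟨i, hi⟩ := hex
      set α' : Fin n → ℕ := Function.update α i (α i - 1) with hα'
      have hαeq : α = α' + Pi.single i 1 := by
        funext j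
        by_cases hj : j = i
        · subst hj; simp [hα', Function.update_self]; omega
        · simp [hα', Function.update_of_ne hj, Pi.single_apply, hj]
      have hsum' : ∑ j, α' j = k := by
        have h1 : ∑ j, α j = α i + ∑ j ∈ Finset.univ.erase i, α j :=
          (Finset.add_sum_erase Finset.univ α (Finset.mem_univ i)).symm
        have h2 : ∑ j, α' j = α' i + ∑ j ∈ Finset.univ.erase i, α' j :=
          (Finset.add_sum_erase Finset.univ α' (Finset.mem_univ i)).symm
        have h3 : ∑ j ∈ Finset.univ.erase i, α' j = ∑ j ∈ Finset.univ.erase i, α j :=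
          Finset.sum_congr rfl fun j hj =>
            Function.update_of_ne (Finset.mem_erase.mp hj).1 _ _
        have h4 : α' i = α i - 1 := Function.update_self i _ α
        omega
      have hUα' : U α' = Vaux D x b α' := ih α' hsum'
      funext y
      have h1 := hUd α' i y
      have h2 := Vaux_hasDerivAt D x b α' i y
      rw [hUα'] at h1
      rw [hαeq]
      exact h1.unique h2
  intro α
  exact key (∑ i, α i) α rfl


/-- Algebraic cancellation identity: for any polynomial 𝒫 of degree ≤ 2ℓ−2 on ℝⁿ
(with D^α 𝒫 encoded by the family U of iterated directional derivatives),
Σ_{|α|≤ℓ−1} [(2ℓ−2−|α|)!/((ℓ−1−|α|)! α!)] (y−x)^α |y−x|^{1−2ℓ}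
  [(−1)^{|α|} D^α 𝒫(y) − D^α 𝒫(x)] = 0 for all y ≠ x. -/
theorem stmt16 {n ℓ : ℕ} (hn : 1 ≤ n) (hℓ : 1 ≤ ℓ)
    (x : EuclideanSpace ℝ (Fin n)) (b : (Fin n → ℕ) → ℝ)
    (U : (Fin n → ℕ) → EuclideanSpace ℝ (Fin n) → ℝ)
    (hU0 : U 0 = fun y => ∑ β ∈ mIdxLe n (2*ℓ-2), b β * ∏ i, (y i - x i) ^ (β i))
    (hUd : ∀ (α : Fin n → ℕ) (i : Fin n) (y : EuclideanSpace ℝ (Fin n)),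
      HasDerivAt (fun t : ℝ => U α (y + t • EuclideanSpace.single i (1:ℝ)))
        (U (α + Pi.single i 1) y) 0) :
    ∀ y : EuclideanSpace ℝ (Fin n), y ≠ x →
      ∑ α ∈ mIdxLe n (ℓ-1),
        (Nat.factorial (2*ℓ-2-(∑ i, α i)) : ℝ) /
            ((Nat.factorial (ℓ-1-(∑ i, α i)) : ℝ) * ∏ i, (Nat.factorial (α i) : ℝ)) *
          (∏ i, (y i - x i) ^ (α i)) / ‖y - x‖ ^ (2*ℓ-1) *
          ((-1:ℝ) ^ (∑ i, α i) * U α y - U α x) = 0 := by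
  intro y hy
  have hUV := U_eq_Vaux (2*ℓ-2) x b U hU0 hUd
  have hFac0 : ∀ α : Fin n → ℕ, (∏ i, ((α i).factorial : ℝ)) ≠ 0 := fun α =>
    Finset.prod_ne_zero_iff.mpr fun i _ => Nat.cast_ne_zero.mpr (α i).factorial_ne_zero
  have hB0 : ∀ s : ℕ, ((Nat.factorial (ℓ-1-s)) : ℝ) ≠ 0 := fun s =>
    Nat.cast_ne_zero.mpr (Nat.factorial_ne_zero _)
  -- value of U at x
  have hUx : ∀ α ∈ mIdxLe n (ℓ-1), U α x = b α * ∏ i, ((α i).factorial : ℝ) := by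
    intro α hα
    rw [hUV α]
    unfold Vaux
    rw [Finset.sum_eq_single α]
    · congr 1
      refine Finset.prod_congr rfl fun i _ => ?_
      rw [Nat.descFactorial_self, Nat.sub_self, sub_self, pow_zero, mul_one]
    · intro β hβ hne
      obtain ⟨i, hi⟩ := Function.ne_iff.mp hne
      rcases lt_or_gt_of_ne hi with h | h
      · have hz : ((β i).descFactorial (α i) : ℝ) * (x i - x i) ^ (β i - α i) = 0 := by
          rw [Nat.descFactorial_eq_zero_iff_lt.mpr h]; simp
        rw [Finset.prod_eq_zero (Finset.mem_univ i) hz, mul_zero]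
      · have hz : ((β i).descFactorial (α i) : ℝ) * (x i - x i) ^ (β i - α i) = 0 := by
          rw [sub_self, zero_pow (by omega : β i - α i ≠ 0), mul_zero]
        rw [Finset.prod_eq_zero (Finset.mem_univ i) hz, mul_zero]
    · intro h
      have := mem_mIdxLe.mp hα
      exact absurd (mem_mIdxLe.mpr (by omega)) h
  -- factor out the norm power
  have hinner : ∀ α ∈ mIdxLe n (ℓ-1),
      (Nat.factorial (2*ℓ-2-(∑ i, α i)) : ℝ) /
          ((Nat.factorial (ℓ-1-(∑ i, α i)) : ℝ) * ∏ i, (Nat.factorial (α i) : ℝ)) *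
        (∏ i, (y i - x i) ^ (α i)) / ‖y - x‖ ^ (2*ℓ-1) *
        ((-1:ℝ) ^ (∑ i, α i) * U α y - U α x)
      = ((Nat.factorial (2*ℓ-2-(∑ i, α i)) : ℝ) /
          ((Nat.factorial (ℓ-1-(∑ i, α i)) : ℝ) * ∏ i, (Nat.factorial (α i) : ℝ)) *
        (∏ i, (y i - x i) ^ (α i)) *
        ((-1:ℝ) ^ (∑ i, α i) * U α y - U α x)) * (‖y - x‖ ^ (2*ℓ-1))⁻¹ := by
    intro α _
    ring
  rw [Finset.sum_congr rfl hinner, ← Finset.sum_mul]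
  -- main claim : the numerator sum vanishes
  have hS : ∑ α ∈ mIdxLe n (ℓ-1),
      (Nat.factorial (2*ℓ-2-(∑ i, α i)) : ℝ) /
          ((Nat.factorial (ℓ-1-(∑ i, α i)) : ℝ) * ∏ i, (Nat.factorial (α i) : ℝ)) *
        (∏ i, (y i - x i) ^ (α i)) *
        ((-1:ℝ) ^ (∑ i, α i) * U α y - U α x) = 0 := by
    -- termwise expansion
    have hterm : ∀ α ∈ mIdxLe n (ℓ-1),
        (Nat.factorial (2*ℓ-2-(∑ i, α i)) : ℝ) /
            ((Nat.factorial (ℓ-1-(∑ i, α i)) : ℝ) * ∏ i, (Nat.factorial (α i) : ℝ)) *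
          (∏ i, (y i - x i) ^ (α i)) *
          ((-1:ℝ) ^ (∑ i, α i) * U α y - U α x)
        = (∑ β ∈ mIdxLe n (2*ℓ-2),
            (-1:ℝ) ^ (∑ i, α i) *
              ((Nat.factorial (2*ℓ-2-(∑ i, α i)) : ℝ) / (Nat.factorial (ℓ-1-(∑ i, α i)) : ℝ)) *
              b β * (∏ i, ((β i).choose (α i) : ℝ)) * ∏ i, (y i - x i) ^ (β i))
          - ((Nat.factorial (2*ℓ-2-(∑ i, α i)) : ℝ) / (Nat.factorial (ℓ-1-(∑ i, α i)) : ℝ)) *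
              b α * ∏ i, (y i - x i) ^ (α i) := by
      intro α hα
      rw [hUx α hα, hUV α]
      unfold Vaux
      rw [mul_sub]
      congr 1
      · -- the Vaux part
        rw [Finset.mul_sum, Finset.mul_sum]
        refine Finset.sum_congr rfl fun β _ => ?_
        have hp : (∏ i, (y i - x i) ^ (α i)) *
            (∏ i, (((β i).descFactorial (α i) : ℝ) * (y i - x i) ^ (β i - α i)))
            = (∏ i, ((β i).choose (α i) : ℝ)) * (∏ i, ((α i).factorial : ℝ)) *
              ∏ i, (y i - x i) ^ (β i) := by
          rw [← Finset.prod_mul_distrib]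
          rw [Finset.prod_congr rfl fun i (_ : i ∈ Finset.univ) => lemC (y i - x i) (α i) (β i)]
          rw [Finset.prod_mul_distrib, Finset.prod_mul_distrib]
        have hcancel : (Nat.factorial (2*ℓ-2-(∑ i, α i)) : ℝ) /
            ((Nat.factorial (ℓ-1-(∑ i, α i)) : ℝ) * ∏ i, (Nat.factorial (α i) : ℝ)) *
            (∏ i, ((α i).factorial : ℝ))
            = (Nat.factorial (2*ℓ-2-(∑ i, α i)) : ℝ) / (Nat.factorial (ℓ-1-(∑ i, α i)) : ℝ) := by
          rw [← div_div, div_mul_cancel₀ _ (hFac0 α)]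
        calc (Nat.factorial (2*ℓ-2-(∑ i, α i)) : ℝ) /
              ((Nat.factorial (ℓ-1-(∑ i, α i)) : ℝ) * ∏ i, (Nat.factorial (α i) : ℝ)) *
            (∏ i, (y i - x i) ^ (α i)) *
            ((-1:ℝ) ^ (∑ i, α i) *
              (b β * ∏ i, (((β i).descFactorial (α i) : ℝ) * (y i - x i) ^ (β i - α i))))
            = ((-1:ℝ) ^ (∑ i, α i) * b β *
                ((Nat.factorial (2*ℓ-2-(∑ i, α i)) : ℝ) /
                  ((Nat.factorial (ℓ-1-(∑ i, α i)) : ℝ) * ∏ i, (Nat.factorial (α i) : ℝ)))) *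
              ((∏ i, (y i - x i) ^ (α i)) *
                (∏ i, (((β i).descFactorial (α i) : ℝ) * (y i - x i) ^ (β i - α i)))) := by ring
          _ = ((-1:ℝ) ^ (∑ i, α i) * b β *
                ((Nat.factorial (2*ℓ-2-(∑ i, α i)) : ℝ) /
                  ((Nat.factorial (ℓ-1-(∑ i, α i)) : ℝ) * ∏ i, (Nat.factorial (α i) : ℝ)))) *
              ((∏ i, ((β i).choose (α i) : ℝ)) * (∏ i, ((α i).factorial : ℝ)) *
                ∏ i, (y i - x i) ^ (β i)) := by rw [hp]
          _ = ((-1:ℝ) ^ (∑ i, α i) * b β * (∏ i, ((β i).choose (α i) : ℝ)) *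
                (∏ i, (y i - x i) ^ (β i))) *
              ((Nat.factorial (2*ℓ-2-(∑ i, α i)) : ℝ) /
                ((Nat.factorial (ℓ-1-(∑ i, α i)) : ℝ) * ∏ i, (Nat.factorial (α i) : ℝ)) *
                (∏ i, ((α i).factorial : ℝ))) := by ring
          _ = _ := by rw [hcancel]; ring
      · -- the value-at-x part
        calc (Nat.factorial (2*ℓ-2-(∑ i, α i)) : ℝ) /
              ((Nat.factorial (ℓ-1-(∑ i, α i)) : ℝ) * ∏ i, (Nat.factorial (α i) : ℝ)) *
            (∏ i, (y i - x i) ^ (α i)) * (b α * ∏ i, ((α i).factorial : ℝ))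
            = (b α * (∏ i, (y i - x i) ^ (α i))) *
              ((Nat.factorial (2*ℓ-2-(∑ i, α i)) : ℝ) /
                ((Nat.factorial (ℓ-1-(∑ i, α i)) : ℝ) * ∏ i, (Nat.factorial (α i) : ℝ)) *
                (∏ i, ((α i).factorial : ℝ))) := by ring
          _ = _ := by rw [← div_div, div_mul_cancel₀ _ (hFac0 α)]; ring
    rw [Finset.sum_congr rfl hterm, Finset.sum_sub_distrib, Finset.sum_comm]
    -- inner sums over α for fixed β
    have hg : ∀ β ∈ mIdxLe n (2*ℓ-2),
        ∑ α ∈ mIdxLe n (ℓ-1),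
          (-1:ℝ) ^ (∑ i, α i) *
            ((Nat.factorial (2*ℓ-2-(∑ i, α i)) : ℝ) / (Nat.factorial (ℓ-1-(∑ i, α i)) : ℝ)) *
            b β * (∏ i, ((β i).choose (α i) : ℝ)) * ∏ i, (y i - x i) ^ (β i)
        = (b β * ∏ i, (y i - x i) ^ (β i)) *
            (if (∑ i, β i) ≤ ℓ-1 then
              ((Nat.factorial (2*ℓ-2-(∑ i, β i)) : ℝ) / (Nat.factorial (ℓ-1-(∑ i, β i)) : ℝ))
            else 0) := by
      intro β hβ
      rw [mIdxLe_eq_biUnion n (ℓ-1), Finset.sum_biUnion (piAntidiag_pairwiseDisjoint n (ℓ-1))]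
      have hk : ∀ k ∈ range (ℓ-1+1),
          ∑ α ∈ (Finset.univ : Finset (Fin n)).piAntidiag k,
            (-1:ℝ) ^ (∑ i, α i) *
              ((Nat.factorial (2*ℓ-2-(∑ i, α i)) : ℝ) / (Nat.factorial (ℓ-1-(∑ i, α i)) : ℝ)) *
              b β * (∏ i, ((β i).choose (α i) : ℝ)) * ∏ i, (y i - x i) ^ (β i)
          = ((-1:ℝ) ^ k *
              ((Nat.factorial (2*ℓ-2-k) : ℝ) / (Nat.factorial (ℓ-1-k) : ℝ)) *
              b β * ∏ i, (y i - x i) ^ (β i)) * (((∑ i, β i).choose k : ℕ) : ℝ) := by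
        intro k _
        have step1 : ∀ α ∈ (Finset.univ : Finset (Fin n)).piAntidiag k,
            (-1:ℝ) ^ (∑ i, α i) *
              ((Nat.factorial (2*ℓ-2-(∑ i, α i)) : ℝ) / (Nat.factorial (ℓ-1-(∑ i, α i)) : ℝ)) *
              b β * (∏ i, ((β i).choose (α i) : ℝ)) * ∏ i, (y i - x i) ^ (β i)
            = ((-1:ℝ) ^ k *
              ((Nat.factorial (2*ℓ-2-k) : ℝ) / (Nat.factorial (ℓ-1-k) : ℝ)) *
              b β * ∏ i, (y i - x i) ^ (β i)) * (∏ i, ((β i).choose (α i) : ℝ)) := by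
          intro α hα
          have hs : ∑ i, α i = k := (Finset.mem_piAntidiag.mp hα).1
          rw [hs]; ring
        rw [Finset.sum_congr rfl step1, ← Finset.mul_sum]
        congr 1
        calc ∑ α ∈ (Finset.univ : Finset (Fin n)).piAntidiag k,
              ∏ i, (((β i).choose (α i) : ℕ) : ℝ)
            = ((∑ α ∈ (Finset.univ : Finset (Fin n)).piAntidiag k,
                ∏ i, (β i).choose (α i) : ℕ) : ℝ) := by push_cast; rfl
          _ = _ := by rw [lemV]
      rw [Finset.sum_congr rfl hk]
      have hm : (∑ i, β i) ≤ 2*(ℓ-1) := by have := mem_mIdxLe.mp hβ; omega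
      have hls := lemS (ℓ-1) hm
      have step2 : ∀ k ∈ range (ℓ-1+1),
          ((-1:ℝ) ^ k *
            ((Nat.factorial (2*ℓ-2-k) : ℝ) / (Nat.factorial (ℓ-1-k) : ℝ)) *
            b β * ∏ i, (y i - x i) ^ (β i)) * (((∑ i, β i).choose k : ℕ) : ℝ)
          = (b β * ∏ i, (y i - x i) ^ (β i)) *
            ((-1:ℝ) ^ k * (((∑ i, β i).choose k : ℕ) : ℝ) *
              ((Nat.factorial (2*(ℓ-1)-k) : ℝ) / (Nat.factorial ((ℓ-1)-k) : ℝ))) := by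
        intro k _
        have e1 : 2*(ℓ-1)-k = 2*ℓ-2-k := by omega
        rw [e1]; ring
      rw [Finset.sum_congr rfl step2, ← Finset.mul_sum, hls]
      have e2 : 2*(ℓ-1)-(∑ i, β i) = 2*ℓ-2-(∑ i, β i) := by omega
      rw [e2]
    rw [Finset.sum_congr rfl hg]
    have hsub : mIdxLe n (ℓ-1) ⊆ mIdxLe n (2*ℓ-2) := fun α hα =>
      mem_mIdxLe.mpr (by have := mem_mIdxLe.mp hα; omega)
    have hext : ∑ β ∈ mIdxLe n (2*ℓ-2),
        (b β * ∏ i, (y i - x i) ^ (β i)) *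
          (if (∑ i, β i) ≤ ℓ-1 then
            ((Nat.factorial (2*ℓ-2-(∑ i, β i)) : ℝ) / (Nat.factorial (ℓ-1-(∑ i, β i)) : ℝ))
          else 0)
        = ∑ β ∈ mIdxLe n (ℓ-1),
        (b β * ∏ i, (y i - x i) ^ (β i)) *
          (if (∑ i, β i) ≤ ℓ-1 then
            ((Nat.factorial (2*ℓ-2-(∑ i, β i)) : ℝ) / (Nat.factorial (ℓ-1-(∑ i, β i)) : ℝ))
          else 0) := by
      refine (Finset.sum_subset hsub fun β _ hβ2 => ?_).symm
      have : ¬ (∑ i, β i) ≤ ℓ-1 := fun h => hβ2 (mem_mIdxLe.mpr h)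
      rw [if_neg this, mul_zero]
    rw [hext]
    rw [Finset.sum_congr rfl (fun β hβ2 => by
      rw [if_pos (mem_mIdxLe.mp hβ2)]
      ring :
      ∀ β ∈ mIdxLe n (ℓ-1),
        (b β * ∏ i, (y i - x i) ^ (β i)) *
          (if (∑ i, β i) ≤ ℓ-1 then
            ((Nat.factorial (2*ℓ-2-(∑ i, β i)) : ℝ) / (Nat.factorial (ℓ-1-(∑ i, β i)) : ℝ))
          else 0)
        = ((Nat.factorial (2*ℓ-2-(∑ i, β i)) : ℝ) / (Nat.factorial (ℓ-1-(∑ i, β i)) : ℝ)) *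
            b β * ∏ i, (y i - x i) ^ (β i))]
    exact sub_self _
  rw [hS, zero_mul]
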